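/- Fix a prime p and a real q = p > 1. For z on the unit circle in ℂ, define h(z) = -log(p)·( z/(√p - z) + conj(z)/(√p - conj(z)) ). Then h is real-valued on the unit circle, and its range is exactly the closed interval [-2·log(p)/(√p - 1), 2·log(p)/(√p + 1)]. -/

import Mathlib

open Complex

/-- The symbol of the conductor operator on the dilation-invariant subspace of `L²(ℚ_p)`,
transported to the unit circle. -/
noncomputable def condSymbol (p : ℝ) (z : ℂ) : ℂ :=
  -(Real.log p : ℂ) * (z / ((Real.sqrt p : ℂ) - z) +
    (starRingEnd ℂ) z / ((Real.sqrt p : ℂ) - (starRingEnd ℂ) z))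

noncomputable def condPhi (p : ℝ) (x : ℝ) : ℝ :=
  -Real.log p * (2 * Real.sqrt p * x - 2) / (Real.sqrt p ^ 2 - 2 * Real.sqrt p * x + 1)

lemma sqrt_gt (p : ℝ) (hp : 1 < p) : 1 < Real.sqrt p := by
  have := Real.lt_sqrt (x := 1) (y := p) (by norm_num)
  rw [this]; nlinarith

lemma den_pos (s x : ℝ) (hs : 1 < s) (hx : x ∈ Set.Icc (-1:ℝ) 1) :
    0 < s ^ 2 - 2 * s * x + 1 := by
  obtain ⟨h1, h2⟩ := hx
  nlinarith [sq_nonneg (s - x), sq_nonneg (1 - x), sq_nonneg (1+x)]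

lemma key (p : ℝ) (hp : 1 < p) (z : ℂ) (hz : ‖z‖ = 1) :
    condSymbol p z = ((condPhi p z.re : ℝ) : ℂ) := by
  set s := Real.sqrt p with hsdef
  have hs : 1 < s := sqrt_gt p hp
  have hxm : z.re ∈ Set.Icc (-1:ℝ) 1 := by
    constructor <;> [skip; skip] <;>
      · have := Complex.abs_re_le_norm z
        rw [hz] at this
        cases abs_le.mp this with | intro a b => linarith
  have hden := den_pos s z.re hs hxm
  have hmul : z * (starRingEnd ℂ) z = 1 := by
    simp [Complex.mul_conj, Complex.normSq_eq_norm_sq, hz]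
  have hadd : z + (starRingEnd ℂ) z = 2 * (z.re : ℂ) := by
    rw [Complex.add_conj]; push_cast; ring
  have h1 : ((s:ℂ) - z) * ((s:ℂ) - (starRingEnd ℂ) z) = ((s ^ 2 - 2 * s * z.re + 1 : ℝ) : ℂ) := by
    push_cast
    linear_combination hmul - (s:ℂ) * hadd
  have habs : ‖((s:ℂ))‖ = s := by
    rw [Complex.norm_real, Real.norm_eq_abs, abs_of_pos (by linarith)]
  have hz1 : (s:ℂ) - z ≠ 0 := by
    intro h
    rw [sub_eq_zero] at h
    rw [h, hz] at habs
    linarith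
  have hz2 : (s:ℂ) - (starRingEnd ℂ) z ≠ 0 := by
    intro h
    rw [sub_eq_zero] at h
    have h2 : ‖(starRingEnd ℂ) z‖ = 1 := by rw [Complex.norm_conj, hz]
    rw [← h, habs] at h2
    linarith
  have hfrac : z / ((s:ℂ) - z) + (starRingEnd ℂ) z / ((s:ℂ) - (starRingEnd ℂ) z) =
      ((s:ℂ) * (z + (starRingEnd ℂ) z) - 2 * (z * (starRingEnd ℂ) z)) /
        (((s:ℂ) - z) * ((s:ℂ) - (starRingEnd ℂ) z)) := by
    field_simp
    ring
  have hcalc : condSymbol p z =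
      -(Real.log p : ℂ) * (((s:ℂ) * (z + (starRingEnd ℂ) z) - 2 * (z * (starRingEnd ℂ) z)) /
        (((s:ℂ) - z) * ((s:ℂ) - (starRingEnd ℂ) z))) := by
    unfold condSymbol
    rw [← hsdef, hfrac]
  rw [hcalc, hmul, hadd, h1]
  unfold condPhi
  rw [← hsdef]
  have : ((s ^ 2 - 2 * s * z.re + 1 : ℝ) : ℂ) ≠ 0 := by
    norm_cast; linarith
  push_cast
  field_simp

lemma phi_image (p : ℝ) (hp : 1 < p) :
    condPhi p '' Set.Icc (-1 : ℝ) 1 =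
      Set.Icc (-(2 * Real.log p) / (Real.sqrt p - 1))
        (2 * Real.log p / (Real.sqrt p + 1)) := by
  set s := Real.sqrt p with hsdef
  set L := Real.log p with hLdef
  have hs : 1 < s := sqrt_gt p hp
  have hL : 0 < L := Real.log_pos hp
  have e1 : condPhi p 1 = -(2 * L) / (s - 1) := by
    unfold condPhi
    rw [← hsdef, ← hLdef, div_eq_div_iff (by nlinarith) (by linarith)]
    ring
  have e2 : condPhi p (-1) = 2 * L / (s + 1) := by
    unfold condPhi
    rw [← hsdef, ← hLdef, div_eq_div_iff (by nlinarith) (by linarith)]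
    ring
  have hcont : ContinuousOn (condPhi p) (Set.Icc (-1 : ℝ) 1) := by
    unfold condPhi
    apply ContinuousOn.div (by fun_prop) (by fun_prop)
    intro x hx
    rw [← hsdef]
    exact (den_pos s x hs hx).ne'
  apply Set.Subset.antisymm
  · rintro r ⟨x, hx, rfl⟩
    have hden := den_pos s x hs hx
    obtain ⟨hx1, hx2⟩ := hx
    constructor
    · unfold condPhi
      rw [← hsdef, ← hLdef, div_le_div_iff₀ (by linarith) hden]
      nlinarith [mul_nonneg (mul_nonneg (mul_nonneg hL.le (by linarith : (0:ℝ) ≤ s))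
        (by linarith : (0:ℝ) ≤ s + 1)) (by linarith : (0:ℝ) ≤ 1 - x)]
    · unfold condPhi
      rw [← hsdef, ← hLdef, div_le_div_iff₀ hden (by linarith)]
      nlinarith [mul_nonneg (mul_nonneg (mul_nonneg hL.le (by linarith : (0:ℝ) ≤ s))
        (by linarith : (0:ℝ) ≤ s - 1)) (by linarith : (0:ℝ) ≤ 1 + x)]
  · rw [← e1, ← e2]
    exact intermediate_value_Icc' (by norm_num) hcont

theorem condSymbol_real_and_range (p : ℝ) (hp : 1 < p) :
    (∀ z : ℂ, ‖z‖ = 1 → (condSymbol p z).im = 0) ∧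
      (fun z : ℂ => (condSymbol p z).re) '' {z : ℂ | ‖z‖ = 1} =
        Set.Icc (-(2 * Real.log p) / (Real.sqrt p - 1))
          (2 * Real.log p / (Real.sqrt p + 1)) := by
  constructor
  · intro z hz
    rw [key p hp z hz]
    exact Complex.ofReal_im _
  · rw [← phi_image p hp]
    apply Set.Subset.antisymm
    · rintro r ⟨z, hz, rfl⟩
      have hz' : ‖z‖ = 1 := hz
      have hxm : z.re ∈ Set.Icc (-1:ℝ) 1 := by
        have := Complex.abs_re_le_norm z
        rw [hz'] at this
        exact abs_le.mp this
      refine ⟨z.re, hxm, ?_⟩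
      show condPhi p z.re = (condSymbol p z).re
      rw [key p hp z hz']
      exact (Complex.ofReal_re _).symm
    · rintro r ⟨x, hx, rfl⟩
      obtain ⟨hx1, hx2⟩ := hx
      set z : ℂ := ⟨x, Real.sqrt (1 - x ^ 2)⟩ with hzdef
      have hz : ‖z‖ = 1 := by
        rw [Complex.norm_def, Complex.normSq_mk,
          Real.mul_self_sqrt (by nlinarith : (0:ℝ) ≤ 1 - x ^ 2),
          show x * x + (1 - x ^ 2) = 1 by ring, Real.sqrt_one]
      have hre : z.re = x := rfl
      refine ⟨z, hz, ?_⟩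
      show (condSymbol p z).re = condPhi p x
      rw [key p hp z hz, hre]
      exact Complex.ofReal_re _
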